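/- arXiv:1803.09772 — 2 statements merged into one kernel-verified Lean document; each statement's English description precedes it below -/
import Mathlib

section
/- Let F be a field of characteristic zero, V a finite-dimensional F-vector space, and S, T commuting nilpotent linear operators on V. Then the F[x,y]-module V_{S,T} (where x acts as S and y acts as T) is isomorphic to an F[x,y]-submodule of W_{xy,z}, the module F[x,y,z] on which x acts as ∂/∂x and y acts as ∂/∂y. -/
open MvPolynomial

noncomputable section StmtAux4

variable {F V : Type*} [Field F] [CharZero F] [AddCommGroup V] [Module F V]

/-- exponent vector xⁱ yʲ zᵏ -/
def mexp3 (i j k : ℕ) : Fin 3 →₀ ℕ :=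
  Finsupp.single 0 i + Finsupp.single 1 j + Finsupp.single 2 k

lemma mexp3_apply0 (i j k : ℕ) : mexp3 i j k 0 = i := by
  simp [mexp3, Finsupp.single_apply]

lemma mexp3_apply1 (i j k : ℕ) : mexp3 i j k 1 = j := by
  simp [mexp3, Finsupp.single_apply]

lemma mexp3_sub0 (i j k : ℕ) :
    mexp3 (i + 1) j k - Finsupp.single 0 1 = mexp3 i j k := by
  ext a
  rw [Finsupp.tsub_apply]
  fin_cases a <;> simp [mexp3, Finsupp.single_apply]

lemma mexp3_sub1 (i j k : ℕ) :
    mexp3 i (j + 1) k - Finsupp.single 1 1 = mexp3 i j k := by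
  ext a
  rw [Finsupp.tsub_apply]
  fin_cases a <;> simp [mexp3, Finsupp.single_apply]

lemma mexp3_eq_single2 {i j k K : ℕ} :
    mexp3 i j k = Finsupp.single 2 K ↔ (i = 0 ∧ j = 0 ∧ k = K) := by
  constructor
  · intro h
    have h0 := DFunLike.congr_fun h (0 : Fin 3)
    have h1 := DFunLike.congr_fun h (1 : Fin 3)
    have h2 := DFunLike.congr_fun h (2 : Fin 3)
    simp [mexp3, Finsupp.single_apply] at h0 h1 h2
    exact ⟨h0, h1, h2⟩
  · rintro ⟨rfl, rfl, rfl⟩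
    simp [mexp3]

/-- The embedding map. -/
def eaux {n : ℕ} (b : Module.Basis (Fin n) F V) (S T : V →ₗ[F] V) (N : ℕ) :
    V →ₗ[F] MvPolynomial (Fin 3) F :=
  ∑ k : Fin n, ∑ i ∈ Finset.range N, ∑ j ∈ Finset.range N,
    ((i.factorial * j.factorial : F))⁻¹ •
      ((monomial (mexp3 i j (k : ℕ))) ∘ₗ ((b.coord k) ∘ₗ (S ^ i * T ^ j)))

lemma eaux_apply {n : ℕ} (b : Module.Basis (Fin n) F V) (S T : V →ₗ[F] V) (N : ℕ) (v : V) :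
    eaux b S T N v = ∑ k : Fin n, ∑ i ∈ Finset.range N, ∑ j ∈ Finset.range N,
      ((i.factorial * j.factorial : F))⁻¹ •
        (monomial (mexp3 i j (k : ℕ)) ((b.coord k) ((S ^ i * T ^ j) v))) := by
  simp [eaux, LinearMap.sum_apply, LinearMap.smul_apply, LinearMap.comp_apply]

lemma inv_mul_aux (a b : F) (ha : a ≠ 0) : (a * b)⁻¹ * a = b⁻¹ := by
  rw [mul_inv, mul_comm (a⁻¹), mul_assoc, inv_mul_cancel₀ ha, mul_one]

lemma fact_inv_succ (i j : ℕ) :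
    (((i + 1).factorial * j.factorial : F))⁻¹ * (((i + 1 : ℕ)) : F)
      = ((i.factorial * j.factorial : F))⁻¹ := by
  have h3 : (((i + 1 : ℕ)) : F) ≠ 0 := Nat.cast_ne_zero.2 (Nat.succ_ne_zero i)
  have h : (((i + 1).factorial : ℕ) * ((j.factorial : ℕ)) : F)
      = (((i + 1 : ℕ)) : F) * ((i.factorial * j.factorial : F)) := by
    push_cast [Nat.factorial_succ]; ring
  rw [h, inv_mul_aux _ _ h3]

lemma fact_inv_succ' (i j : ℕ) :
    ((i.factorial * (j + 1).factorial : F))⁻¹ * (((j + 1 : ℕ)) : F)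
      = ((i.factorial * j.factorial : F))⁻¹ := by
  have h3 : (((j + 1 : ℕ)) : F) ≠ 0 := Nat.cast_ne_zero.2 (Nat.succ_ne_zero j)
  have h : (((i.factorial : ℕ)) * (((j + 1).factorial : ℕ)) : F)
      = (((j + 1 : ℕ)) : F) * ((i.factorial * j.factorial : F)) := by
    push_cast [Nat.factorial_succ]; ring
  rw [h, inv_mul_aux _ _ h3]

lemma deriv_shift0 (N k : ℕ) (g : ℕ → ℕ → F) (hg : ∀ j, g N j = 0) :
    pderiv (0 : Fin 3) (∑ i ∈ Finset.range N, ∑ j ∈ Finset.range N,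
      ((i.factorial * j.factorial : F))⁻¹ •
        (monomial (mexp3 i j k) (g i j) : MvPolynomial (Fin 3) F))
    = ∑ i ∈ Finset.range N, ∑ j ∈ Finset.range N,
      ((i.factorial * j.factorial : F))⁻¹ • monomial (mexp3 i j k) (g (i + 1) j) := by
  cases N with
  | zero => simp
  | succ M =>
    have term0 : pderiv (0 : Fin 3) (∑ j ∈ Finset.range (M + 1),
        ((Nat.factorial 0 * j.factorial : F))⁻¹ •
          (monomial (mexp3 0 j k) (g 0 j) : MvPolynomial (Fin 3) F)) = 0 := by
      rw [map_sum]
      refine Finset.sum_eq_zero fun j _ => ?_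
      rw [Derivation.map_smul, pderiv_monomial, mexp3_apply0]
      simp
    have termsucc : ∀ i, pderiv (0 : Fin 3) (∑ j ∈ Finset.range (M + 1),
          ((Nat.factorial (i + 1) * j.factorial : F))⁻¹ •
            (monomial (mexp3 (i + 1) j k) (g (i + 1) j) : MvPolynomial (Fin 3) F))
        = ∑ j ∈ Finset.range (M + 1),
          ((i.factorial * j.factorial : F))⁻¹ • monomial (mexp3 i j k) (g (i + 1) j) := by
      intro i
      rw [map_sum]
      refine Finset.sum_congr rfl fun j _ => ?_
      rw [Derivation.map_smul, pderiv_monomial, mexp3_apply0, mexp3_sub0]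
      rw [smul_monomial, smul_monomial]
      congr 1
      rw [smul_eq_mul, smul_eq_mul, ← mul_assoc, mul_comm _ (g (i+1) j), mul_assoc,
        mul_comm (g (i+1) j), fact_inv_succ]
    calc pderiv (0 : Fin 3) (∑ i ∈ Finset.range (M + 1), ∑ j ∈ Finset.range (M + 1),
            ((i.factorial * j.factorial : F))⁻¹ •
              (monomial (mexp3 i j k) (g i j) : MvPolynomial (Fin 3) F))
        = ∑ i ∈ Finset.range (M + 1), pderiv (0 : Fin 3) (∑ j ∈ Finset.range (M + 1),
            ((i.factorial * j.factorial : F))⁻¹ •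
              (monomial (mexp3 i j k) (g i j) : MvPolynomial (Fin 3) F)) := map_sum _ _ _
      _ = (∑ i ∈ Finset.range M, pderiv (0 : Fin 3) (∑ j ∈ Finset.range (M + 1),
            ((Nat.factorial (i + 1) * j.factorial : F))⁻¹ •
              (monomial (mexp3 (i + 1) j k) (g (i + 1) j) : MvPolynomial (Fin 3) F)))
          + pderiv (0 : Fin 3) (∑ j ∈ Finset.range (M + 1),
            ((Nat.factorial 0 * j.factorial : F))⁻¹ •
              (monomial (mexp3 0 j k) (g 0 j) : MvPolynomial (Fin 3) F)) :=
          Finset.sum_range_succ' _ M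
      _ = ∑ i ∈ Finset.range M, ∑ j ∈ Finset.range (M + 1),
            ((i.factorial * j.factorial : F))⁻¹ • monomial (mexp3 i j k) (g (i + 1) j) := by
          rw [term0, add_zero]
          exact Finset.sum_congr rfl fun i _ => termsucc i
      _ = ∑ i ∈ Finset.range (M + 1), ∑ j ∈ Finset.range (M + 1),
            ((i.factorial * j.factorial : F))⁻¹ • monomial (mexp3 i j k) (g (i + 1) j) := by
          rw [Finset.sum_range_succ]
          have : ∑ j ∈ Finset.range (M + 1),
              ((M.factorial * j.factorial : F))⁻¹ •
                (monomial (mexp3 M j k) (g (M + 1) j) : MvPolynomial (Fin 3) F) = 0 := by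
            refine Finset.sum_eq_zero fun j _ => ?_
            rw [hg j]
            simp
          rw [this, add_zero]

lemma deriv_shift1 (N k : ℕ) (g : ℕ → ℕ → F) (hg : ∀ i, g i N = 0) :
    pderiv (1 : Fin 3) (∑ i ∈ Finset.range N, ∑ j ∈ Finset.range N,
      ((i.factorial * j.factorial : F))⁻¹ •
        (monomial (mexp3 i j k) (g i j) : MvPolynomial (Fin 3) F))
    = ∑ i ∈ Finset.range N, ∑ j ∈ Finset.range N,
      ((i.factorial * j.factorial : F))⁻¹ • monomial (mexp3 i j k) (g i (j + 1)) := by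
  cases N with
  | zero => simp
  | succ M =>
    rw [map_sum]
    refine Finset.sum_congr rfl fun i _ => ?_
    have term0 : pderiv (1 : Fin 3)
        (((i.factorial * (Nat.factorial 0) : F))⁻¹ •
          (monomial (mexp3 i 0 k) (g i 0) : MvPolynomial (Fin 3) F)) = 0 := by
      rw [Derivation.map_smul, pderiv_monomial, mexp3_apply1]
      simp
    have termsucc : ∀ j, pderiv (1 : Fin 3)
          (((i.factorial * Nat.factorial (j + 1) : F))⁻¹ •
            (monomial (mexp3 i (j + 1) k) (g i (j + 1)) : MvPolynomial (Fin 3) F))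
        = ((i.factorial * j.factorial : F))⁻¹ • monomial (mexp3 i j k) (g i (j + 1)) := by
      intro j
      rw [Derivation.map_smul, pderiv_monomial, mexp3_apply1, mexp3_sub1]
      rw [smul_monomial, smul_monomial]
      congr 1
      rw [smul_eq_mul, smul_eq_mul, ← mul_assoc, mul_comm _ (g i (j+1)), mul_assoc,
        mul_comm (g i (j+1)), fact_inv_succ']
    calc pderiv (1 : Fin 3) (∑ j ∈ Finset.range (M + 1),
            ((i.factorial * j.factorial : F))⁻¹ •
              (monomial (mexp3 i j k) (g i j) : MvPolynomial (Fin 3) F))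
        = ∑ j ∈ Finset.range (M + 1), pderiv (1 : Fin 3)
            (((i.factorial * j.factorial : F))⁻¹ •
              (monomial (mexp3 i j k) (g i j) : MvPolynomial (Fin 3) F)) := map_sum _ _ _
      _ = (∑ j ∈ Finset.range M, pderiv (1 : Fin 3)
            (((i.factorial * Nat.factorial (j + 1) : F))⁻¹ •
              (monomial (mexp3 i (j + 1) k) (g i (j + 1)) : MvPolynomial (Fin 3) F)))
          + pderiv (1 : Fin 3) (((i.factorial * (Nat.factorial 0) : F))⁻¹ •
              (monomial (mexp3 i 0 k) (g i 0) : MvPolynomial (Fin 3) F)) :=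
          Finset.sum_range_succ' _ M
      _ = ∑ j ∈ Finset.range M,
            ((i.factorial * j.factorial : F))⁻¹ • monomial (mexp3 i j k) (g i (j + 1)) := by
          rw [term0, add_zero]
          exact Finset.sum_congr rfl fun j _ => termsucc j
      _ = ∑ j ∈ Finset.range (M + 1),
            ((i.factorial * j.factorial : F))⁻¹ • monomial (mexp3 i j k) (g i (j + 1)) := by
          rw [Finset.sum_range_succ, hg i]
          simp

end StmtAux4

theorem stmt_4 (F V : Type*) [Field F] [CharZero F]
    [AddCommGroup V] [Module F V] [FiniteDimensional F V]
    (S T : V →ₗ[F] V) (hcomm : Commute S T)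
    (hS : IsNilpotent S) (hT : IsNilpotent T) :
    ∃ W : Submodule F (MvPolynomial (Fin 3) F),
      (∀ p ∈ W, pderiv (0 : Fin 3) p ∈ W ∧ pderiv (1 : Fin 3) p ∈ W) ∧
      ∃ e : V →ₗ[F] MvPolynomial (Fin 3) F,
        Function.Injective e ∧ LinearMap.range e = W ∧
        ∀ v : V, e (S v) = pderiv (0 : Fin 3) (e v) ∧
                 e (T v) = pderiv (1 : Fin 3) (e v) := by
  obtain ⟨n1, hn1⟩ := hS
  obtain ⟨n2, hn2⟩ := hT
  set N : ℕ := n1 + n2 + 1 with hN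
  have hSN : S ^ N = 0 := pow_eq_zero_of_le (by omega) hn1
  have hTN : T ^ N = 0 := pow_eq_zero_of_le (by omega) hn2
  set b := Module.finBasis F V with hb
  set e : V →ₗ[F] MvPolynomial (Fin 3) F := eaux b S T N with he
  -- commutation helpers
  have hSsh : ∀ i j (v : V), (S ^ i * T ^ j) (S v) = (S ^ (i + 1) * T ^ j) v := by
    intro i j v
    have h : T ^ j * S = S * T ^ j := ((hcomm.symm).pow_left j).eq
    have : S ^ i * T ^ j * S = S ^ (i + 1) * T ^ j := by
      rw [mul_assoc, h, ← mul_assoc, ← pow_succ]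
    rw [← Module.End.mul_apply, this]
  have hTsh : ∀ i j (v : V), (S ^ i * T ^ j) (T v) = (S ^ i * T ^ (j + 1)) v := by
    intro i j v
    have : S ^ i * T ^ j * T = S ^ i * T ^ (j + 1) := by
      rw [mul_assoc, ← pow_succ]
    rw [← Module.End.mul_apply, this]
  have hd0 : ∀ v : V, e (S v) = pderiv (0 : Fin 3) (e v) := by
    intro v
    rw [he, eaux_apply, eaux_apply, map_sum]
    refine Finset.sum_congr rfl fun k _ => ?_
    rw [deriv_shift0 N (k : ℕ) (fun i j => b.coord k ((S ^ i * T ^ j) v))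
      (fun j => by simp [hSN])]
    exact Finset.sum_congr rfl fun i _ => Finset.sum_congr rfl fun j _ => by
      rw [hSsh]
  have hd1 : ∀ v : V, e (T v) = pderiv (1 : Fin 3) (e v) := by
    intro v
    rw [he, eaux_apply, eaux_apply, map_sum]
    refine Finset.sum_congr rfl fun k _ => ?_
    rw [deriv_shift1 N (k : ℕ) (fun i j => b.coord k ((S ^ i * T ^ j) v))
      (fun i => by simp [hTN])]
    exact Finset.sum_congr rfl fun i _ => Finset.sum_congr rfl fun j _ => by
      rw [hTsh]
  -- coefficient extraction
  have hcoeff : ∀ (v : V) (k : Fin (Module.finrank F V)),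
      coeff (Finsupp.single 2 (k : ℕ)) (e v) = b.coord k v := by
    intro v k
    rw [he, eaux_apply]
    rw [← lcoeff_apply, map_sum]
    have hterm : ∀ k' : Fin (Module.finrank F V),
        (lcoeff F (Finsupp.single 2 (k : ℕ)))
          (∑ i ∈ Finset.range N, ∑ j ∈ Finset.range N,
            ((i.factorial * j.factorial : F))⁻¹ •
              (monomial (mexp3 i j (k' : ℕ)) ((b.coord k') ((S ^ i * T ^ j) v))))
        = if k' = k then b.coord k v else 0 := by
      intro k'
      rw [map_sum]
      simp_rw [map_sum, map_smul, lcoeff_apply, coeff_monomial, mexp3_eq_single2]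
      by_cases hk : k' = k
      · subst hk
        rw [if_pos rfl]
        have h1 : ∀ i ∈ Finset.range N, ∀ j ∈ Finset.range N,
            ((i.factorial * j.factorial : F))⁻¹ •
              (if i = 0 ∧ j = 0 ∧ (k' : ℕ) = (k' : ℕ)
                then (b.coord k') ((S ^ i * T ^ j) v) else 0)
            = if i = 0 ∧ j = 0 then (b.coord k') v else 0 := by
          intro i _ j _
          by_cases hij : i = 0 ∧ j = 0
          · obtain ⟨rfl, rfl⟩ := hij
            simp [pow_zero]
          · rw [if_neg hij, if_neg (by tauto), smul_zero]
        rw [Finset.sum_congr rfl fun i hi => Finset.sum_congr rfl fun j hj => h1 i hi j hj]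
        have h0N : (0 : ℕ) ∈ Finset.range N := by simp [hN]
        rw [Finset.sum_eq_single_of_mem 0 h0N ?_, Finset.sum_eq_single_of_mem 0 h0N ?_]
        · simp
        · intro j _ hj; rw [if_neg (by tauto)]
        · intro i _ hi
          refine Finset.sum_eq_zero fun j _ => ?_
          rw [if_neg (by tauto)]
      · rw [if_neg hk]
        refine Finset.sum_eq_zero fun i _ => Finset.sum_eq_zero fun j _ => ?_
        have : ¬(i = 0 ∧ j = 0 ∧ (k' : ℕ) = (k : ℕ)) := by
          rintro ⟨-, -, h⟩
          exact hk (Fin.ext h)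
        rw [if_neg this, smul_zero]
    rw [Finset.sum_congr rfl fun k' _ => hterm k']
    simp
  have hinj : Function.Injective e := by
    rw [← LinearMap.ker_eq_bot, LinearMap.ker_eq_bot']
    intro v hv
    rw [← b.forall_coord_eq_zero_iff]
    intro k
    rw [← hcoeff v k, hv]
    simp
  refine ⟨LinearMap.range e, ?_, e, hinj, rfl, fun v => ⟨hd0 v, hd1 v⟩⟩
  rintro p ⟨v, rfl⟩
  exact ⟨⟨S v, hd0 v⟩, ⟨T v, hd1 v⟩⟩
end

section
/- Let F be a field of characteristic zero, and let M be the Lie algebra of derivations of F[x,y,z,t] of the form α·∂/∂x + β·∂/∂y + f(x,y,z)·∂/∂t (α, β ∈ F, f ∈ F[x,y,z]). If V is a finite-dimensional F-subspace of {f(x,y,z)·∂/∂t : f ∈ F[x,y,z]} closed under bracketing with ∂/∂x and ∂/∂y, then L := F⟨∂/∂x, ∂/∂y⟩ + V is a finite-dimensional Lie subalgebra of M, and L is nilpotent. -/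
open MvPolynomial

section Setup

variable (F : Type*) [Field F]

/-- The linear map `f ↦ f·∂/∂t` from `F[x,y,z,t]` into the endomorphisms of
`F[x,y,z,t]` (variables indexed `x=0, y=1, z=2, t=3`). -/
noncomputable def coeffDt :
    MvPolynomial (Fin 4) F →ₗ[F] Module.End F (MvPolynomial (Fin 4) F) where
  toFun f := (LinearMap.mulLeft F f) ∘ₗ (pderiv (3 : Fin 4) : Derivation F _ _).toLinearMap
  map_add' f g := by ext p; simp [add_mul]
  map_smul' c f := by ext p; simp [smul_mul_assoc]

/-- The subspace `I = { f(x,y,z)·∂/∂t : f ∈ F[x,y,z] }`. -/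
noncomputable def Isub : Submodule F (Module.End F (MvPolynomial (Fin 4) F)) :=
  (Subalgebra.toSubmodule
    (MvPolynomial.supported F ({0, 1, 2} : Set (Fin 4)))).map (coeffDt F)

/-- The subspace `M = { α·∂/∂x + β·∂/∂y + f(x,y,z)·∂/∂t }`. -/
noncomputable def Msub : Submodule F (Module.End F (MvPolynomial (Fin 4) F)) :=
  Submodule.span F
    {((pderiv (0 : Fin 4) : Derivation F _ _).toLinearMap),
     ((pderiv (1 : Fin 4) : Derivation F _ _).toLinearMap)} ⊔ Isub F

end Setup

attribute [local instance 100] LieRing.ofAssociativeRing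

section Aux

lemma my_pderiv_comm {σ R : Type*} [CommSemiring R] (i j : σ) (p : MvPolynomial σ R) :
    pderiv i (pderiv j p) = pderiv j (pderiv i p) := by
  classical
  induction p using MvPolynomial.induction_on' with
  | add p q hp hq => simp [hp, hq]
  | monomial s a =>
      rcases eq_or_ne i j with rfl | hij
      · rfl
      · simp only [pderiv_monomial, Finsupp.tsub_apply, Finsupp.single_eq_of_ne hij,
          Finsupp.single_eq_of_ne hij.symm, Nat.sub_zero]
        rw [tsub_right_comm]
        ring_nf

variable {F : Type*} [Field F]

lemma brack_pderiv_coeffDt (i : Fin 4) (f : MvPolynomial (Fin 4) F) :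
    ⁅((pderiv i : Derivation F _ _).toLinearMap : Module.End F (MvPolynomial (Fin 4) F)),
      coeffDt F f⁆ = coeffDt F (pderiv i f) := by
  refine LinearMap.ext fun p => ?_
  simp only [Ring.lie_def, LinearMap.sub_apply, Module.End.mul_apply, coeffDt, LinearMap.coe_mk,
    AddHom.coe_mk, LinearMap.coe_comp, Function.comp_apply, Derivation.coeFn_coe,
    LinearMap.mulLeft_apply]
  rw [Derivation.leibniz]
  simp only [smul_eq_mul]
  rw [my_pderiv_comm i 3]
  ring

lemma brack_coeffDt_coeffDt (f g : MvPolynomial (Fin 4) F)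
    (hf : pderiv (3 : Fin 4) f = 0) (hg : pderiv (3 : Fin 4) g = 0) :
    ⁅coeffDt F f, coeffDt F g⁆ = 0 := by
  refine LinearMap.ext fun p => ?_
  simp only [Ring.lie_def, LinearMap.sub_apply, Module.End.mul_apply, coeffDt, LinearMap.coe_mk,
    AddHom.coe_mk, LinearMap.coe_comp, Function.comp_apply, Derivation.coeFn_coe,
    LinearMap.mulLeft_apply, LinearMap.zero_apply]
  rw [Derivation.leibniz, Derivation.leibniz, hf, hg]
  simp only [smul_eq_mul, zero_mul, zero_add]
  ring

lemma brack_pderiv_pderiv (i j : Fin 4) :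
    ⁅((pderiv i : Derivation F _ _).toLinearMap : Module.End F (MvPolynomial (Fin 4) F)),
      ((pderiv j : Derivation F _ _).toLinearMap)⁆ = 0 := by
  refine LinearMap.ext fun p => ?_
  simp only [Ring.lie_def, LinearMap.sub_apply, Module.End.mul_apply, Derivation.coeFn_coe,
    LinearMap.zero_apply]
  rw [my_pderiv_comm i j, sub_self]

lemma pderiv_pow_monomial (i : Fin 4) (n : ℕ) :
    ∀ (s : Fin 4 →₀ ℕ) (a : F), s i < n →
      (((pderiv i : Derivation F _ _).toLinearMap : Module.End F (MvPolynomial (Fin 4) F)) ^ n)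
        (monomial s a) = 0 := by
  induction n with
  | zero => intro s a h; omega
  | succ n ih =>
      intro s a h
      rw [pow_succ]
      simp only [Module.End.mul_apply, Derivation.coeFn_coe, pderiv_monomial]
      rcases Nat.eq_zero_or_pos (s i) with h0 | h0
      · rw [h0]; simp
      · exact ih _ _ (by
          rw [Finsupp.tsub_apply, Finsupp.single_eq_same]; omega)

lemma pderiv_pow_eq_zero (i : Fin 4) (f : MvPolynomial (Fin 4) F) :
    (((pderiv i : Derivation F _ _).toLinearMap : Module.End F (MvPolynomial (Fin 4) F)) ^
      (f.totalDegree + 1)) f = 0 := by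
  set d := f.totalDegree with hd
  conv_lhs => rw [f.as_sum]
  rw [map_sum]
  refine Finset.sum_eq_zero fun s hs => ?_
  refine pderiv_pow_monomial i _ s _ ?_
  have h1 : s i ≤ s.sum fun _ e => e := by
    rcases Nat.eq_zero_or_pos (s i) with h0 | h0
    · omega
    · exact Finset.single_le_sum (f := fun j => s j) (fun _ _ => Nat.zero_le _)
        (Finsupp.mem_support_iff.2 (by omega))
  have h2 := le_totalDegree hs
  rw [← hd] at h2
  omega

lemma ad_pow_coeffDt (i : Fin 4) (n : ℕ) (f : MvPolynomial (Fin 4) F) :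
    ((LieAlgebra.ad F (Module.End F (MvPolynomial (Fin 4) F))
        ((pderiv i : Derivation F _ _).toLinearMap)) ^ n) (coeffDt F f)
      = coeffDt F ((((pderiv i : Derivation F _ _).toLinearMap :
          Module.End F (MvPolynomial (Fin 4) F)) ^ n) f) := by
  induction n generalizing f with
  | zero => simp
  | succ n ih =>
      rw [pow_succ', pow_succ', Module.End.mul_apply, Module.End.mul_apply, ih,
        LieAlgebra.ad_apply, brack_pderiv_coeffDt]
      rfl

/-- Membership in `Isub` gives vanishing `∂/∂t` of the coefficient polynomial. -/
lemma Isub_pderiv3 {f : MvPolynomial (Fin 4) F}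
    (hf : f ∈ Subalgebra.toSubmodule (MvPolynomial.supported F ({0, 1, 2} : Set (Fin 4)))) :
    pderiv (3 : Fin 4) f = 0 := by
  refine pderiv_eq_zero_of_notMem_vars fun h3 => ?_
  have := (MvPolynomial.mem_supported.1 hf) h3
  simp only [Set.mem_insert_iff, Set.mem_singleton_iff] at this
  rcases this with h | h | h <;> exact absurd h (by decide)

end Aux

set_option maxHeartbeats 1000000 in
set_option synthInstance.maxHeartbeats 1000000 in
lemma stmt_16_aux (F : Type*) [Field F] [CharZero F]
    (V : Submodule F (Module.End F (MvPolynomial (Fin 4) F)))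
    (hVI : V ≤ Isub F) [FiniteDimensional F V]
    (hVx : ∀ D ∈ V,
      ⁅((pderiv (0 : Fin 4) : Derivation F _ _).toLinearMap :
          Module.End F (MvPolynomial (Fin 4) F)), D⁆ ∈ V)
    (hVy : ∀ D ∈ V,
      ⁅((pderiv (1 : Fin 4) : Derivation F _ _).toLinearMap :
          Module.End F (MvPolynomial (Fin 4) F)), D⁆ ∈ V) :
    ∃ K : LieSubalgebra F (Module.End F (MvPolynomial (Fin 4) F)),
      K.toSubmodule =
        Submodule.span F
          {((pderiv (0 : Fin 4) : Derivation F _ _).toLinearMap),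
           ((pderiv (1 : Fin 4) : Derivation F _ _).toLinearMap)} ⊔ V ∧
      K.toSubmodule ≤ Msub F ∧
      FiniteDimensional F K ∧
      LieRing.IsNilpotent K := by
  set E := Module.End F (MvPolynomial (Fin 4) F)
  set P0 : E := ((pderiv (0 : Fin 4) : Derivation F _ _).toLinearMap) with hP0
  set P1 : E := ((pderiv (1 : Fin 4) : Derivation F _ _).toLinearMap) with hP1
  set S : Submodule F E := Submodule.span F {P0, P1} with hS
  set W : Submodule F E := S ⊔ V with hW
  -- brackets inside V vanish
  have hIV : ∀ v ∈ V, ∀ v' ∈ V, ⁅v, v'⁆ = 0 := by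
    intro v hv v' hv'
    obtain ⟨f, hf, rfl⟩ := hVI hv
    obtain ⟨g, hg, rfl⟩ := hVI hv'
    exact brack_coeffDt_coeffDt f g (Isub_pderiv3 hf) (Isub_pderiv3 hg)
  have h01 : ⁅P0, P1⁆ = 0 := brack_pderiv_pderiv 0 1
  have h10 : ⁅P1, P0⁆ = 0 := brack_pderiv_pderiv 1 0
  have h00 : ⁅P0, P0⁆ = 0 := brack_pderiv_pderiv 0 0
  have h11 : ⁅P1, P1⁆ = 0 := brack_pderiv_pderiv 1 1
  -- brackets inside S vanish
  have hspan0 : ∀ s ∈ S, ∀ s' ∈ S, ⁅s, s'⁆ = 0 := by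
    intro s hs s' hs'
    obtain ⟨a, b, rfl⟩ := Submodule.mem_span_pair.1 hs
    obtain ⟨c, d, rfl⟩ := Submodule.mem_span_pair.1 hs'
    simp only [add_lie, lie_add, smul_lie, lie_smul, h01, h10, h00, h11, smul_zero,
      add_zero, zero_add]
  -- bracket of S with V lands in V
  have hsv : ∀ s ∈ S, ∀ v ∈ V, ⁅s, v⁆ ∈ V := by
    intro s hs v hv
    obtain ⟨a, b, rfl⟩ := Submodule.mem_span_pair.1 hs
    rw [add_lie, smul_lie, smul_lie]
    exact add_mem (V.smul_mem _ (hVx v hv)) (V.smul_mem _ (hVy v hv))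
  -- bracket of W with W lands in V
  have hbr : ∀ u ∈ W, ∀ w ∈ W, ⁅u, w⁆ ∈ V := by
    intro u hu w hw
    obtain ⟨s, hs, v, hv, rfl⟩ := Submodule.mem_sup.1 hu
    obtain ⟨s', hs', v', hv', rfl⟩ := Submodule.mem_sup.1 hw
    rw [add_lie, lie_add, lie_add]
    refine add_mem (add_mem ?_ (hsv s hs v' hv')) (add_mem ?_ ?_)
    · rw [hspan0 s hs s' hs']; exact V.zero_mem
    · rw [← lie_skew]; exact V.neg_mem (hsv s' hs' v hv)
    · rw [hIV v hv v' hv']; exact V.zero_mem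
  haveI : FiniteDimensional F S :=
    FiniteDimensional.span_of_finite F ((Set.finite_singleton P1).insert P0)
  haveI hFDW : FiniteDimensional F W := Submodule.finiteDimensional_sup S V
  set K : LieSubalgebra F E :=
    { toSubmodule := W,
      lie_mem' := fun {x y} hx hy => Submodule.mem_sup_right (hbr x hx y hy) } with hK
  haveI hFDK : FiniteDimensional F K := hFDW
  refine ⟨K, rfl, ?_, hFDK, ?_⟩
  · rw [Msub]
    exact sup_le_sup le_rfl hVI
  · -- nilpotency via Engel's theorem
    rw [LieAlgebra.isNilpotent_iff_forall (R := F)]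
    intro x
    rw [Module.End.isNilpotent_iff_of_finite]
    intro y
    -- decompose x
    obtain ⟨s, hs, v, hv, husum⟩ := Submodule.mem_sup.1 x.2
    obtain ⟨a, b, hsab⟩ := Submodule.mem_span_pair.1 hs
    -- restricted operators on V
    have hVx' : ∀ w ∈ V, (LieAlgebra.ad F E P0) w ∈ V := fun w hw => hVx w hw
    have hVy' : ∀ w ∈ V, (LieAlgebra.ad F E P1) w ∈ V := fun w hw => hVy w hw
    set Ar : Module.End F V := (LieAlgebra.ad F E P0).restrict hVx' with hAr
    set Br : Module.End F V := (LieAlgebra.ad F E P1).restrict hVy' with hBr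
    have hnilA : IsNilpotent Ar := by
      rw [Module.End.isNilpotent_iff_of_finite]
      intro m
      obtain ⟨f, hf, hfe⟩ := hVI m.2
      refine ⟨f.totalDegree + 1, ?_⟩
      have : ((Ar ^ (f.totalDegree + 1)) m : E) = 0 := by
        rw [hAr, Module.End.pow_restrict, LinearMap.restrict_apply]
        show ((LieAlgebra.ad F E P0) ^ (f.totalDegree + 1)) (m : E) = 0
        rw [← hfe, ad_pow_coeffDt, pderiv_pow_eq_zero, map_zero]
      exact Subtype.ext this
    have hnilB : IsNilpotent Br := by
      rw [Module.End.isNilpotent_iff_of_finite]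
      intro m
      obtain ⟨f, hf, hfe⟩ := hVI m.2
      refine ⟨f.totalDegree + 1, ?_⟩
      have : ((Br ^ (f.totalDegree + 1)) m : E) = 0 := by
        rw [hBr, Module.End.pow_restrict, LinearMap.restrict_apply]
        show ((LieAlgebra.ad F E P1) ^ (f.totalDegree + 1)) (m : E) = 0
        rw [← hfe, ad_pow_coeffDt, pderiv_pow_eq_zero, map_zero]
      exact Subtype.ext this
    have hABcomm : Commute (LieAlgebra.ad F E P0) (LieAlgebra.ad F E P1) := by
      have h : (LieAlgebra.ad F E) ⁅P0, P1⁆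
          = ⁅(LieAlgebra.ad F E) P0, (LieAlgebra.ad F E) P1⁆ :=
        (LieAlgebra.ad F E).map_lie P0 P1
      rw [h01, map_zero, Ring.lie_def] at h
      exact (sub_eq_zero.1 h.symm)
    have hcomm : Commute Ar Br := by
      refine LinearMap.ext fun m => Subtype.ext ?_
      have := LinearMap.congr_fun hABcomm (m : E)
      simpa [hAr, hBr, Module.End.mul_apply, LinearMap.restrict_coe_apply] using this
    set Cr : Module.End F V := a • Ar + b • Br with hCr
    have hnilC : IsNilpotent Cr :=
      Commute.isNilpotent_add ((hcomm.smul_left a).smul_right b)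
        (hnilA.smul a) (hnilB.smul b)
    obtain ⟨N, hN⟩ := hnilC
    set u : E := (x : E) with hu
    -- action of ad u on elements of V
    have hu_on_V : ∀ z (hz : z ∈ V), (LieAlgebra.ad F E u) z = (Cr ⟨z, hz⟩ : E) := by
      intro z hz
      rw [LieAlgebra.ad_apply, ← husum, add_lie, ← hsab, add_lie, smul_lie, smul_lie,
        hIV v hv z hz, add_zero]
      simp only [hCr, LinearMap.add_apply, LinearMap.smul_apply, Submodule.coe_add,
        SetLike.val_smul, hAr, hBr, LinearMap.restrict_coe_apply, LieAlgebra.ad_apply]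
    have hVmem : ∀ z (hz : z ∈ V), (LieAlgebra.ad F E u) z ∈ V := by
      intro z hz
      rw [hu_on_V z hz]
      exact (Cr ⟨z, hz⟩).2
    have key2 : ∀ n z (hz : z ∈ V),
        ((LieAlgebra.ad F E u) ^ n) z = ((Cr ^ n) ⟨z, hz⟩ : E) := by
      intro n
      induction n with
      | zero => intro z hz; rfl
      | succ n ih =>
          intro z hz
          rw [pow_succ', pow_succ', Module.End.mul_apply, Module.End.mul_apply, ih z hz,
            hu_on_V _ ((Cr ^ n) ⟨z, hz⟩).2]
    -- relating ad in K with ad in E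
    have key : ∀ n (z : K), (((LieAlgebra.ad F K x) ^ n) z : E)
        = ((LieAlgebra.ad F E u) ^ n) (z : E) := by
      intro n
      induction n with
      | zero => intro z; rfl
      | succ n ih =>
          intro z
          rw [pow_succ', pow_succ', Module.End.mul_apply, Module.End.mul_apply, ← ih z]
          rfl
    have hz1 : (LieAlgebra.ad F E u) (y : E) ∈ V := by
      rw [LieAlgebra.ad_apply]
      exact hbr u x.2 (y : E) y.2
    refine ⟨N + 1, ?_⟩
    have hcoe : (((LieAlgebra.ad F K x) ^ (N + 1)) y : E) = 0 := by
      rw [key, pow_succ, Module.End.mul_apply, key2 N _ hz1, hN]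
      rfl
    exact Subtype.ext hcoe


set_option synthInstance.maxHeartbeats 1000000 in
theorem stmt_16 (F : Type*) [Field F] [CharZero F]
    (V : Submodule F (Module.End F (MvPolynomial (Fin 4) F)))
    (hVI : V ≤ Isub F) [FiniteDimensional F V]
    (hVx : ∀ D ∈ V,
      ⁅((pderiv (0 : Fin 4) : Derivation F _ _).toLinearMap :
          Module.End F (MvPolynomial (Fin 4) F)), D⁆ ∈ V)
    (hVy : ∀ D ∈ V,
      ⁅((pderiv (1 : Fin 4) : Derivation F _ _).toLinearMap :
          Module.End F (MvPolynomial (Fin 4) F)), D⁆ ∈ V) :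
    ∃ K : LieSubalgebra F (Module.End F (MvPolynomial (Fin 4) F)),
      K.toSubmodule =
        Submodule.span F
          {((pderiv (0 : Fin 4) : Derivation F _ _).toLinearMap),
           ((pderiv (1 : Fin 4) : Derivation F _ _).toLinearMap)} ⊔ V ∧
      K.toSubmodule ≤ Msub F ∧
      FiniteDimensional F K ∧
      LieRing.IsNilpotent K :=
  stmt_16_aux F V hVI hVx hVy
end
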